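/- For all indices 1 ≤ i, l ≤ n and 1 ≤ j, k ≤ r such that either n does not divide i + l − 2, or the pair (j, k) is not mixed (i.e. j, k are both ≤ p or both > p), the element e_{ij} ⊗ e'_{lk} lies in the submodule N. -/
import Mathlib


open TensorProduct

noncomputable section

/-- The diagonal operator `X_a` on `M`: `X_a e_{ij} = τ^{i-1}(a)·e_{ij}` if `j ≤ p` and
`X_a e_{ij} = τ^{i-1}(ā)·e_{ij}` if `j > p` (indices zero-based). -/
def Xop {A : Type*} [CommRing A] (n r p : ℕ) (τ c : A ≃+* A) (a : A)
    (w : Fin n × Fin r → A) : Fin n × Fin r → A :=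
  fun ij => (if (ij.2 : ℕ) < p then (⇑τ)^[(ij.1 : ℕ)] a else (⇑τ)^[(ij.1 : ℕ)] (c a)) * w ij

/-- The shift operator `U` on `M`: `U e_{1j} = π·e_{nj}` and `U e_{ij} = e_{(i-1)j}` for
`2 ≤ i ≤ n`, written in coordinates. -/
def Uop {A : Type*} [CommRing A] (n r : ℕ) (π : A)
    (w : Fin n × Fin r → A) : Fin n × Fin r → A :=
  fun ij =>
    if h : (ij.1 : ℕ) + 1 < n then w (⟨(ij.1 : ℕ) + 1, h⟩, ij.2)
    else π * w (⟨0, ij.1.pos⟩, ij.2)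

/-- The diagonal operator `X'_a` on `M'`: `X'_a e'_{ij} = τ^{n+1-i}(ā)·e'_{ij}` if `j ≤ p`
and `X'_a e'_{ij} = τ^{n+1-i}(a)·e'_{ij}` if `j > p` (indices zero-based; `τ^n = id`). -/
def X'op {A : Type*} [CommRing A] (n r p : ℕ) (τ c : A ≃+* A) (a : A)
    (w : Fin n × Fin r → A) : Fin n × Fin r → A :=
  fun ij =>
    (if (ij.2 : ℕ) < p then (⇑τ)^[n - (ij.1 : ℕ)] (c a) else (⇑τ)^[n - (ij.1 : ℕ)] a) * w ij

/-- The shift operator `U'` on `M'`: `U' e'_{1j} = π·e'_{nj}` and `U' e'_{ij} = e'_{(i-1)j}`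
for `2 ≤ i ≤ n`, written in coordinates. -/
def U'op {A : Type*} [CommRing A] (n r : ℕ) (π : A)
    (w : Fin n × Fin r → A) : Fin n × Fin r → A :=
  fun ij =>
    if h : (ij.1 : ℕ) + 1 < n then w (⟨(ij.1 : ℕ) + 1, h⟩, ij.2)
    else π * w (⟨0, ij.1.pos⟩, ij.2)

/-- The submodule `N ⊆ M ⊗_A M'` generated by the elements `(X_a m) ⊗ m' - m ⊗ (X'_a m')`
and `(U m) ⊗ m' - m ⊗ (U' m')`. -/
def relN {A : Type*} [CommRing A] (n r p : ℕ) (τ c : A ≃+* A) (π : A) :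
    Submodule A ((Fin n × Fin r → A) ⊗[A] (Fin n × Fin r → A)) :=
  Submodule.span A
    ({x | ∃ (a : A) (m m' : Fin n × Fin r → A),
        x = (Xop n r p τ c a m) ⊗ₜ[A] m' - m ⊗ₜ[A] (X'op n r p τ c a m')} ∪
      {x | ∃ m m' : Fin n × Fin r → A,
        x = (Uop n r π m) ⊗ₜ[A] m' - m ⊗ₜ[A] (U'op n r π m')})

/-- A pair `(j, k)` is mixed if `j ≤ p < k` or `k ≤ p < j` (zero-based: `j < p ≤ k` or
`k < p ≤ j`). -/
def MixedPair (p : ℕ) {r : ℕ} (j k : Fin r) : Prop :=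
  ((j : ℕ) < p ∧ p ≤ (k : ℕ)) ∨ ((k : ℕ) < p ∧ p ≤ (j : ℕ))

/-- For indices with either `n ∤ i + l - 2` or `(j, k)` not mixed, the basis tensor
`e_{ij} ⊗ e'_{lk}` lies in the submodule `N`. -/
theorem statement18 {A : Type*} [CommRing A] (n r p : ℕ)
    (hn : 2 ≤ n) (hr : 2 ≤ r) (hp : 1 ≤ p) (hpr : p < r)
    (τ c : A ≃+* A) (hτn : ∀ a, (⇑τ)^[n] a = a)
    (hc : ∀ a, c (c a) = a) (hcτ : ∀ a, c (τ a) = τ (c a))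
    (π : A) (hπ : τ π = π)
    (hx : ∃ x : A, ∀ (i i' : Fin n) (b b' : Bool), (i, b) ≠ (i', b') →
      (⇑τ)^[(i : ℕ)] (bif b then c x else x) ≠ (⇑τ)^[(i' : ℕ)] (bif b' then c x else x) ∧
      IsUnit ((⇑τ)^[(i : ℕ)] (bif b then c x else x) -
        (⇑τ)^[(i' : ℕ)] (bif b' then c x else x)))
    (i l : Fin n) (j k : Fin r)
    (h : ¬ (n ∣ ((i : ℕ) + (l : ℕ))) ∨ ¬ MixedPair p j k) :
    (Pi.single (i, j) (1 : A)) ⊗ₜ[A] (Pi.single (l, k) (1 : A)) ∈ relN n r p τ c π := by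
  classical
  obtain ⟨x, hx⟩ := hx
  set e : Fin n × Fin r → A := Pi.single (i, j) 1 with he
  set e' : Fin n × Fin r → A := Pi.single (l, k) 1 with he'
  -- index l' : Fin n representing n - l mod n
  have hln : (n - (l : ℕ)) % n < n := Nat.mod_lt _ (by omega)
  set l' : Fin n := ⟨(n - (l : ℕ)) % n, hln⟩ with hl'
  have hiter : ∀ y : A, (⇑τ)^[n - (l : ℕ)] y = (⇑τ)^[(l' : ℕ)] y := by
    intro y
    by_cases h0 : (l : ℕ) = 0
    · have h1 : (l' : ℕ) = 0 := by simp [hl', h0, Nat.mod_self]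
      rw [h1, h0, Nat.sub_zero, hτn y]
      rfl
    · have h1 : n - (l : ℕ) < n := by have := l.isLt; omega
      have h2 : (l' : ℕ) = n - (l : ℕ) := Nat.mod_eq_of_lt h1
      rw [h2]
  set lam : A := if (j : ℕ) < p then (⇑τ)^[(i : ℕ)] x else (⇑τ)^[(i : ℕ)] (c x) with hlam
  set mu : A := if (k : ℕ) < p then (⇑τ)^[(l' : ℕ)] (c x) else (⇑τ)^[(l' : ℕ)] x with hmu
  have hX : Xop n r p τ c x e = lam • e := by
    funext ij'
    rcases eq_or_ne ij' (i, j) with h' | h'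
    · subst h'
      simp [Xop, he, hlam, Pi.single_eq_same]
    · simp [Xop, he, Pi.single_eq_of_ne h', mul_zero]
  have hX' : X'op n r p τ c x e' = mu • e' := by
    funext ij'
    rcases eq_or_ne ij' (l, k) with h' | h'
    · subst h'
      simp [X'op, he', hmu, Pi.single_eq_same, hiter]
    · simp [X'op, he', Pi.single_eq_of_ne h', mul_zero]
  have hgen : (lam • e) ⊗ₜ[A] e' - e ⊗ₜ[A] (mu • e') ∈ relN n r p τ c π := by
    apply Submodule.subset_span
    exact Or.inl ⟨x, e, e', by rw [hX, hX']⟩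
  have heq : (lam • e) ⊗ₜ[A] e' - e ⊗ₜ[A] (mu • e') = (lam - mu) • (e ⊗ₜ[A] e') := by
    rw [TensorProduct.tmul_smul, ← TensorProduct.smul_tmul']
    module
  have hg2 : (lam - mu) • (e ⊗ₜ[A] e') ∈ relN n r p τ c π := by
    rw [heq] at hgen; exact hgen
  -- if i = l' then n ∣ i + l
  have hdvd_of_eq : i = l' → n ∣ (i : ℕ) + (l : ℕ) := by
    intro heq
    have hval : (i : ℕ) = (n - (l : ℕ)) % n := by rw [heq]
    by_cases h0 : (l : ℕ) = 0
    · exact ⟨0, by simp [h0, Nat.mod_self] at hval; omega⟩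
    · have h1 : n - (l : ℕ) < n := by have := l.isLt; omega
      rw [Nat.mod_eq_of_lt h1] at hval
      exact ⟨1, by have := l.isLt; omega⟩
  have hu : IsUnit (lam - mu) := by
    by_cases hj : (j : ℕ) < p <;> by_cases hk : (k : ℕ) < p
    · -- both < p : lam = τ^i x, mu = τ^{l'} (c x)
      have := (hx i l' false true (by simp)).2
      simpa [hlam, hmu, if_pos hj, if_pos hk] using this
    · -- mixed: j < p ≤ k
      have hmix : MixedPair p j k := Or.inl ⟨hj, le_of_not_gt hk⟩
      have hnd : ¬ (n ∣ (i : ℕ) + (l : ℕ)) := h.resolve_right (fun hh => hh hmix)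
      have hne : i ≠ l' := fun heq => hnd (hdvd_of_eq heq)
      have := (hx i l' false false (by simp [hne])).2
      simpa [hlam, hmu, if_pos hj, if_neg hk] using this
    · -- mixed: k < p ≤ j
      have hmix : MixedPair p j k := Or.inr ⟨hk, le_of_not_gt hj⟩
      have hnd : ¬ (n ∣ (i : ℕ) + (l : ℕ)) := h.resolve_right (fun hh => hh hmix)
      have hne : i ≠ l' := fun heq => hnd (hdvd_of_eq heq)
      have := (hx i l' true true (by simp [hne])).2
      simpa [hlam, hmu, if_neg hj, if_pos hk] using this
    · -- both ≥ p : lam = τ^i (c x), mu = τ^{l'} x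
      have := (hx i l' true false (by simp)).2
      simpa [hlam, hmu, if_neg hj, if_neg hk] using this
  have hsmul : (lam - mu) • (e ⊗ₜ[A] e') = hu.unit • (e ⊗ₜ[A] e') := by
    rw [Units.smul_def, IsUnit.unit_spec]
  rw [hsmul] at hg2
  exact (Submodule.smul_mem_iff' _ _).mp hg2

end
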